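/- Let k, n ∈ ℕ and let t_1 < … < t_n be nonzero integers with |t_j| ≥ k for every 1 ≤ j ≤ n. For a nonzero integer t, let c_t = (-1)^{-t}/((-t+1)!) if t < 0 and c_t = (-1)^{t+1}·t! if t > 0. Then the map from {1,…,k}^n to ℚ sending (w_1,…,w_n) to Σ_{j=1}^n w_j·c_{t_j} is injective; hence it is a bijection from the set of words of length n over the alphabet {1,…,k} onto the set ℚ(t_1,…,t_n,k) = {Σ_{j=1}^n q_j·c_{t_j} : 1 ≤ q_j ≤ k for each j}, which therefore has exactly k^n elements. -/

import Mathlib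

/-- The coefficient `c_t` attached to a nonzero integer index `t`:
`c_t = (-1)^{-t}/((-t+1)!)` for `t < 0` and `c_t = (-1)^{t+1}·t!` for `t > 0`. -/
def ratCoeff (t : ℤ) : ℚ :=
  if t < 0 then (-1 : ℚ) ^ (-t).toNat / ((-t).toNat + 1).factorial
  else (-1 : ℚ) ^ (t.toNat + 1) * (t.toNat).factorial

lemma abs_ratCoeff_pos (t : ℤ) (h : 0 < t) :
    |ratCoeff t| = ((t.toNat).factorial : ℚ) := by
  unfold ratCoeff
  rw [if_neg (by omega)]
  rw [abs_mul, abs_pow, abs_neg, abs_one, one_pow, one_mul, abs_of_nonneg (by positivity)]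

lemma abs_ratCoeff_neg (t : ℤ) (h : t < 0) :
    |ratCoeff t| = 1 / (((-t).toNat + 1).factorial : ℚ) := by
  unfold ratCoeff
  rw [if_pos h]
  rw [abs_div, abs_pow, abs_neg, abs_one, one_pow, abs_of_nonneg (by positivity)]

lemma posS (T : ℕ) (hT : 2 ≤ T) :
    ∑ u ∈ Finset.Ico 1 T, (u - 1) * u.factorial + 2 ≤ T.factorial := by
  induction T, hT using Nat.le_induction with
  | base => simp [Finset.sum_Ico_succ_top]
  | succ T hT ih =>
      rw [Finset.sum_Ico_succ_top (by omega)]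
      have h2 : 2 ≤ T.factorial := (by decide : 2 ≤ Nat.factorial 2).trans (Nat.factorial_le hT)
      have : (T+1).factorial = (T+1) * T.factorial := rfl
      -- sum + (T-1)*T! + 2 ≤ T! - 2 + ... ≤ (T+1)!
      nlinarith [ih, Nat.sub_add_cancel (show 1 ≤ T by omega)]

lemma negS (M : ℕ) (hM : 2 ≤ M) : ∀ B, M ≤ B →
    ∑ m ∈ Finset.Ico M B, ((m : ℚ) - 2) / m.factorial + 1 / (B - 1).factorial
      ≤ 1 / (M - 1).factorial := by
  intro B
  induction B with
  | zero => intro h; omega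
  | succ B ihB =>
      intro hMB
      rcases eq_or_lt_of_le hMB with h | h
      · simp [← h]
      · have hMB' : M ≤ B := by omega
        rw [Finset.sum_Ico_succ_top hMB']
        have ih := ihB hMB'
        have hB2 : 2 ≤ B := le_trans hM hMB'
        have e1 : (B:ℚ) * (B-1).factorial = B.factorial := by
          rw [← Nat.cast_mul]
          congr 1
          rw [← Nat.succ_pred_eq_of_pos (by omega : 0 < B)]
          simp [Nat.factorial_succ]
        have e2 : ((B+1:ℕ) - 1) = B := by omega
        rw [e2]
        have hBf : (0:ℚ) < B.factorial := by positivity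
        have hBf1 : (0:ℚ) < (B-1).factorial := by positivity
        -- (B-2)/B! + 1/B! = (B-1)/B! = 1/(B-1)! - 1/B! ≤ ... 
        have key : ((B:ℚ) - 2)/B.factorial + 1/B.factorial ≤ 1/(B-1).factorial := by
          rw [← add_div, div_le_div_iff₀ hBf hBf1, ← e1]
          ring_nf
          nlinarith [hBf1]
        linarith

lemma posSumL {ι : Type*} (T : ℕ) (hT : 2 ≤ T) (s : Finset ι) (u : ι → ℕ)
    (hinj : Set.InjOn u s) (h1 : ∀ j ∈ s, 1 ≤ u j) (hT' : ∀ j ∈ s, u j < T) :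
    ∑ j ∈ s, ((u j : ℚ) - 1) * (u j).factorial ≤ (T.factorial : ℚ) - 2 := by
  have e : ∀ j ∈ s, ((u j : ℚ) - 1) * (u j).factorial
      = (((u j - 1) * (u j).factorial : ℕ) : ℚ) := by
    intro j hj
    have := h1 j hj
    push_cast [Nat.cast_sub (h1 j hj)]
    ring
  rw [Finset.sum_congr rfl e, ← Nat.cast_sum]
  have h1' : (∑ j ∈ s, (u j - 1) * (u j).factorial : ℕ)
      ≤ ∑ m ∈ Finset.Ico 1 T, (m - 1) * m.factorial := by
    rw [← Finset.sum_image (f := fun m => (m - 1) * m.factorial) (g := u)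
      (fun x hx y hy h => hinj hx hy h)]
    apply Finset.sum_le_sum_of_subset_of_nonneg
    · intro x hx
      simp only [Finset.mem_image] at hx
      obtain ⟨j, hj, rfl⟩ := hx
      exact Finset.mem_Ico.2 ⟨h1 j hj, hT' j hj⟩
    · intros; positivity
  have := posS T hT
  have : (∑ j ∈ s, (u j - 1) * (u j).factorial : ℕ) + 2 ≤ T.factorial := by omega
  have h4 : ((∑ j ∈ s, (u j - 1) * (u j).factorial : ℕ) : ℚ) + 2 ≤ (T.factorial : ℚ) := by
    exact_mod_cast this
  linarith

lemma negSumL {ι : Type*} (lo : ℕ) (hlo : 2 ≤ lo) (s : Finset ι) (m : ι → ℕ)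
    (hinj : Set.InjOn m s) (hm : ∀ j ∈ s, lo ≤ m j) :
    ∑ j ∈ s, ((m j : ℚ) - 2) / (m j).factorial < 1 / ((lo - 1).factorial : ℚ) := by
  set B := max lo ((s.image m).sup id + 1) with hB
  have hloB : lo ≤ B := le_max_left _ _
  have h1 : ∑ j ∈ s, ((m j : ℚ) - 2) / (m j).factorial
      ≤ ∑ x ∈ Finset.Ico lo B, ((x : ℚ) - 2) / x.factorial := by
    rw [← Finset.sum_image (f := fun x : ℕ => ((x : ℚ) - 2) / x.factorial) (g := m)
      (fun x hx y hy h => hinj hx hy h)]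
    apply Finset.sum_le_sum_of_subset_of_nonneg
    · intro x hx
      refine Finset.mem_Ico.2 ⟨?_, ?_⟩
      · obtain ⟨j, hj, rfl⟩ := Finset.mem_image.1 hx
        exact hm j hj
      · have : x ≤ (s.image m).sup id := Finset.le_sup (f := id) hx
        calc x < (s.image m).sup id + 1 := by omega
          _ ≤ B := le_max_right _ _
    · intro i hi _
      have : 2 ≤ i := hlo.trans (Finset.mem_Ico.1 hi).1
      have h2i : (2:ℚ) ≤ i := by exact_mod_cast this
      have h3i : (0:ℚ) < (i.factorial : ℚ) := by positivity
      exact div_nonneg (by linarith) h3i.le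
  have h2 := negS lo hlo B hloB
  have h3 : (0:ℚ) < 1 / ((B-1).factorial : ℚ) := by positivity
  linarith

lemma keyBound (k : ℕ) (hk : 2 ≤ k) (n : ℕ) (t : Fin (n+1) → ℤ) (ht : StrictMono t)
    (ht0 : ∀ j, t j ≠ 0) (htk : ∀ j, (k : ℤ) ≤ |t j|) :
    ∑ j : Fin n, ((k : ℚ) - 1) * |ratCoeff (t j.castSucc)| < |ratCoeff (t (Fin.last n))| := by
  classical
  have hlt : ∀ j : Fin n, t j.castSucc < t (Fin.last n) :=
    fun j => ht (Fin.castSucc_lt_last j)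
  set P : Finset (Fin n) := Finset.univ.filter (fun j => 0 < t j.castSucc) with hP
  set N : Finset (Fin n) := Finset.univ.filter (fun j => ¬ 0 < t j.castSucc) with hN
  have hsplit : ∑ j : Fin n, ((k : ℚ) - 1) * |ratCoeff (t j.castSucc)|
      = ∑ j ∈ P, ((k : ℚ) - 1) * |ratCoeff (t j.castSucc)|
      + ∑ j ∈ N, ((k : ℚ) - 1) * |ratCoeff (t j.castSucc)| :=
    (Finset.sum_filter_add_sum_filter_not _ _ _).symm
  have hNneg : ∀ j ∈ N, t j.castSucc < 0 := by
    intro j hj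
    have := (Finset.mem_filter.1 hj).2
    have := ht0 j.castSucc
    omega
  have hPpos : ∀ j ∈ P, 0 < t j.castSucc := fun j hj => (Finset.mem_filter.1 hj).2
  -- bound each term
  have hPbound : ∑ j ∈ P, ((k : ℚ) - 1) * |ratCoeff (t j.castSucc)|
      ≤ ∑ j ∈ P, (((t j.castSucc).toNat : ℚ) - 1) * ((t j.castSucc).toNat.factorial : ℚ) := by
    apply Finset.sum_le_sum
    intro j hj
    rw [abs_ratCoeff_pos _ (hPpos j hj)]
    have habs := htk j.castSucc
    rw [abs_of_pos (hPpos j hj)] at habs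
    have : (k : ℚ) ≤ ((t j.castSucc).toNat : ℚ) := by exact_mod_cast (by omega : k ≤ (t j.castSucc).toNat)
    have hf : (0:ℚ) ≤ ((t j.castSucc).toNat.factorial : ℚ) := by positivity
    nlinarith
  have hNbound : ∑ j ∈ N, ((k : ℚ) - 1) * |ratCoeff (t j.castSucc)|
      ≤ ∑ j ∈ N, ((((-t j.castSucc).toNat + 1 : ℕ) : ℚ) - 2) / (((-t j.castSucc).toNat + 1).factorial : ℚ) := by
    apply Finset.sum_le_sum
    intro j hj
    rw [abs_ratCoeff_neg _ (hNneg j hj)]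
    have habs := htk j.castSucc
    rw [abs_of_neg (hNneg j hj)] at habs
    have hkm : (k : ℚ) ≤ ((-t j.castSucc).toNat : ℚ) := by
      exact_mod_cast (by omega : k ≤ (-t j.castSucc).toNat)
    rw [mul_one_div, div_le_div_iff₀ (by positivity) (by positivity)]
    push_cast
    nlinarith [Nat.one_le_iff_ne_zero.2 (Nat.factorial_ne_zero ((-t j.castSucc).toNat + 1)),
      (by positivity : (0:ℚ) < ((((-t j.castSucc).toNat + 1).factorial : ℕ) : ℚ))]
  set u : Fin n → ℕ := fun j => (t j.castSucc).toNat with hu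
  set m : Fin n → ℕ := fun j => (-t j.castSucc).toNat + 1 with hm
  have hinjt : ∀ x y : Fin n, t x.castSucc = t y.castSucc → x = y := by
    intro x y h
    exact Fin.castSucc_injective n (ht.injective h)
  rcases (ht0 (Fin.last n)).lt_or_gt with hlast | hlast
  · -- t last < 0 : all entries negative, P empty
    have hPe : P = ∅ := by
      rw [hP, Finset.filter_eq_empty_iff]
      intro j _
      have := hlt j
      omega
    set M : ℕ := (-t (Fin.last n)).toNat with hM
    have hNs : ∑ j ∈ N, ((m j : ℚ) - 2) / ((m j).factorial : ℚ)
        < 1 / ((M + 2 - 1).factorial : ℚ) := by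
      apply negSumL (M + 2) (by omega) N m
      · intro x hx y hy hxy
        have hxn := hNneg x hx
        have hyn := hNneg y hy
        apply hinjt
        simp only [hm] at hxy
        omega
      · intro j hj
        have h1 := hlt j
        have h2 := hNneg j hj
        simp only [hm, hM]
        omega
    have habslast : |ratCoeff (t (Fin.last n))| = 1 / ((M + 1).factorial : ℚ) :=
      abs_ratCoeff_neg _ hlast
    rw [hsplit, hPe, Finset.sum_empty, zero_add, habslast]
    have : M + 2 - 1 = M + 1 := by omega
    rw [this] at hNs
    exact lt_of_le_of_lt hNbound hNs
  · -- t last > 0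
    set T : ℕ := (t (Fin.last n)).toNat with hT
    have hT2 : 2 ≤ T := by
      have := htk (Fin.last n)
      rw [abs_of_pos hlast] at this
      simp only [hT]; omega
    have hPs : ∑ j ∈ P, ((u j : ℚ) - 1) * ((u j).factorial : ℚ)
        ≤ (T.factorial : ℚ) - 2 := by
      apply posSumL T hT2 P u
      · intro x hx y hy hxy
        have hxp := hPpos x hx
        have hyp := hPpos y hy
        apply hinjt
        simp only [hu] at hxy
        omega
      · intro j hj
        have := hPpos j hj
        simp only [hu]; omega
      · intro j hj
        have := hlt j
        simp only [hu, hT]; omega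
    have hNs : ∑ j ∈ N, ((m j : ℚ) - 2) / ((m j).factorial : ℚ)
        < 1 / ((3 - 1).factorial : ℚ) := by
      apply negSumL 3 (by omega) N m
      · intro x hx y hy hxy
        have hxn := hNneg x hx
        have hyn := hNneg y hy
        apply hinjt
        simp only [hm] at hxy
        omega
      · intro j hj
        have h2 := hNneg j hj
        have h3 := htk j.castSucc
        rw [abs_of_neg h2] at h3
        simp only [hm]
        omega
    have habslast : |ratCoeff (t (Fin.last n))| = (T.factorial : ℚ) :=
      abs_ratCoeff_pos _ hlast
    have hfac : (2 : ℚ) ≤ (T.factorial : ℚ) := by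
      exact_mod_cast (by decide : 2 ≤ Nat.factorial 2).trans (Nat.factorial_le hT2)
    have h12 : (1 / ((3-1).factorial : ℚ)) = 1/2 := by norm_num [Nat.factorial]
    rw [hsplit, habslast]
    have := lt_of_le_of_lt hNbound hNs
    rw [h12] at this
    linarith [le_trans hPbound hPs]

lemma zero_of_sum (k : ℕ) : ∀ (n : ℕ) (t : Fin n → ℤ), StrictMono t → (∀ j, t j ≠ 0) →
    (∀ j, (k : ℤ) ≤ |t j|) → ∀ d : Fin n → ℤ, (∀ j, |d j| ≤ (k : ℤ) - 1) →
    ∑ j, (d j : ℚ) * ratCoeff (t j) = 0 → ∀ j, d j = 0 := by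
  rcases le_or_gt k 1 with hk | hk
  · intro n t _ _ _ d hd _ j
    have h1 := hd j
    have h2 := abs_nonneg (d j)
    have h3 : |d j| = 0 := by omega
    simpa using abs_eq_zero.1 h3
  intro n
  induction n with
  | zero => intro t _ _ _ d _ _ j; exact j.elim0
  | succ n ih =>
    intro t ht ht0 htk d hd hsum
    rw [Fin.sum_univ_castSucc] at hsum
    have hdl : d (Fin.last n) = 0 := by
      by_contra hne
      have h1 : (1 : ℚ) ≤ |(d (Fin.last n) : ℚ)| := by
        rw [← Int.cast_abs]
        exact_mod_cast Int.one_le_abs (by omega)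
      have hkey := keyBound k hk n t ht ht0 htk
      have h2 : |∑ j : Fin n, (d j.castSucc : ℚ) * ratCoeff (t j.castSucc)|
          ≤ ∑ j : Fin n, ((k : ℚ) - 1) * |ratCoeff (t j.castSucc)| := by
        refine (Finset.abs_sum_le_sum_abs _ _).trans (Finset.sum_le_sum ?_)
        intro j _
        rw [abs_mul]
        have hdj : |(d j.castSucc : ℚ)| ≤ (k : ℚ) - 1 := by
          rw [← Int.cast_abs]
          exact_mod_cast hd j.castSucc
        exact mul_le_mul_of_nonneg_right hdj (abs_nonneg _)
      have h3 : |ratCoeff (t (Fin.last n))|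
          ≤ |(d (Fin.last n) : ℚ) * ratCoeff (t (Fin.last n))| := by
        rw [abs_mul]
        nlinarith [abs_nonneg (ratCoeff (t (Fin.last n)))]
      have h4 : |∑ j : Fin n, (d j.castSucc : ℚ) * ratCoeff (t j.castSucc)|
          = |(d (Fin.last n) : ℚ) * ratCoeff (t (Fin.last n))| := by
        have he : ∑ j : Fin n, (d j.castSucc : ℚ) * ratCoeff (t j.castSucc)
            = -((d (Fin.last n) : ℚ) * ratCoeff (t (Fin.last n))) := by linarith
        rw [he, abs_neg]
      linarith
    have hrest : ∑ j : Fin n, (d j.castSucc : ℚ) * ratCoeff (t j.castSucc) = 0 := by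
      rw [hdl] at hsum
      simpa using hsum
    have hmono : StrictMono (fun j : Fin n => t j.castSucc) := by
      intro a b hab
      exact ht (Fin.castSucc_lt_castSucc_iff.2 hab)
    have hrec := ih (fun j => t j.castSucc) hmono (fun j => ht0 _) (fun j => htk _)
      (fun j => d j.castSucc) (fun j => hd _) hrest
    intro j
    rcases Fin.eq_castSucc_or_eq_last j with ⟨i, rfl⟩ | rfl
    · exact hrec i
    · exact hdl

/-- For nonzero integers `t_1 < … < t_n` with `|t_j| ≥ k`, the map sending a word
`(w_1,…,w_n) ∈ {1,…,k}^n` to `Σ_j w_j·c_{t_j}` is injective on `{1,…,k}^n`; hence it is a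
bijection onto `ℚ(t_1,…,t_n,k) = {Σ_j q_j·c_{t_j} : 1 ≤ q_j ≤ k}`, which has exactly
`k^n` elements. -/
theorem words_to_rationals_injective (k n : ℕ) (t : Fin n → ℤ) (ht : StrictMono t)
    (ht0 : ∀ j, t j ≠ 0) (htk : ∀ j, (k : ℤ) ≤ |t j|) :
    Set.InjOn (fun w : Fin n → ℕ => ∑ j, (w j : ℚ) * ratCoeff (t j))
      {w : Fin n → ℕ | ∀ j, 1 ≤ w j ∧ w j ≤ k} ∧
    Set.ncard {x : ℚ | ∃ q : Fin n → ℕ, (∀ j, 1 ≤ q j ∧ q j ≤ k) ∧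
      x = ∑ j, (q j : ℚ) * ratCoeff (t j)} = k ^ n := by
  have hinj : Set.InjOn (fun w : Fin n → ℕ => ∑ j, (w j : ℚ) * ratCoeff (t j))
      {w : Fin n → ℕ | ∀ j, 1 ≤ w j ∧ w j ≤ k} := by
    intro w hw v hv heq
    simp only [Set.mem_setOf_eq] at hw hv
    have hs : ∑ j, (((w j : ℤ) - (v j : ℤ) : ℤ) : ℚ) * ratCoeff (t j) = 0 := by
      push_cast
      rw [Finset.sum_congr rfl (fun j _ => sub_mul ((w j : ℚ)) _ _), Finset.sum_sub_distrib]
      simp only at heq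
      rw [heq, sub_self]
    have hd : ∀ j, |(w j : ℤ) - (v j : ℤ)| ≤ (k : ℤ) - 1 := by
      intro j
      have h1 := hw j
      have h2 := hv j
      rw [abs_le]
      omega
    have := zero_of_sum k n t ht ht0 htk (fun j => (w j : ℤ) - (v j : ℤ)) hd hs
    funext j
    have h : (w j : ℤ) - (v j : ℤ) = 0 := this j
    omega
  refine ⟨hinj, ?_⟩
  have hset : {x : ℚ | ∃ q : Fin n → ℕ, (∀ j, 1 ≤ q j ∧ q j ≤ k) ∧
      x = ∑ j, (q j : ℚ) * ratCoeff (t j)}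
      = (fun w : Fin n → ℕ => ∑ j, (w j : ℚ) * ratCoeff (t j)) ''
        {w : Fin n → ℕ | ∀ j, 1 ≤ w j ∧ w j ≤ k} := by
    ext x
    simp only [Set.mem_setOf_eq, Set.mem_image]
    constructor
    · rintro ⟨q, hq, rfl⟩; exact ⟨q, hq, rfl⟩
    · rintro ⟨q, hq, rfl⟩; exact ⟨q, hq, rfl⟩
  rw [hset, Set.ncard_image_of_injOn hinj]
  have hsetF : ({w : Fin n → ℕ | ∀ j, 1 ≤ w j ∧ w j ≤ k} : Set (Fin n → ℕ))
      = ↑(Fintype.piFinset fun _ : Fin n => Finset.Icc 1 k) := by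
    ext w
    simp [Fintype.mem_piFinset, Finset.mem_Icc, Pi.le_def, forall_and]
  rw [hsetF, Set.ncard_coe_finset, Fintype.card_piFinset]
  simp [Nat.card_Icc]
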